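/- arXiv:2203.00090 — 2 statements merged into one kernel-verified Lean document; each statement's English description precedes it below -/
import Mathlib

section
/- Let T be a rooted tree with an arbitrary integer β(v) assigned to each vertex v, and assign to each vertex a rational function F(v,x) by the recursion F(v,x) = x - β(v) - ∑_{w child of v} 1/F(w,x). Then det(xI - A(T) - diag(β)) = det(xI + A(T) - diag(β)) = ∏_{v ∈ V(T)} F(v,x). -/
open Polynomial

/-- A rooted tree on the vertex set `Fin (n+1)`, encoded by a parent function:
the root is `0`, and every non-root vertex has a parent strictly smaller than
itself (which guarantees acyclicity and connectedness). -/
structure ParentTree (n : ℕ) where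
  parent : Fin (n + 1) → Fin (n + 1)
  parent_lt : ∀ i : Fin (n + 1), i ≠ 0 → parent i < i
  parent_zero : parent 0 = 0

namespace ParentTree

variable {n : ℕ}

/-- The set of children of a vertex. -/
def children (T : ParentTree n) (v : Fin (n + 1)) : Finset (Fin (n + 1)) :=
  Finset.univ.filter fun w => T.parent w = v ∧ w ≠ v

/-- The adjacency matrix of a rooted tree, with entries in `R`. -/
def adjMat (T : ParentTree n) (R : Type) [Zero R] [One R] :
    Matrix (Fin (n + 1)) (Fin (n + 1)) R :=
  Matrix.of fun i j => if i ≠ j ∧ (T.parent i = j ∨ T.parent j = i) then 1 else 0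

/-- The degree of a vertex. -/
def deg (T : ParentTree n) (v : Fin (n + 1)) : ℕ :=
  (T.children v).card + if v = 0 then 0 else 1

end ParentTree


open RatFunc in
lemma aux_intDegree_add {f g : RatFunc ℚ} (hf : f ≠ 0)
    (h : g = 0 ∨ intDegree g < intDegree f) :
    f + g ≠ 0 ∧ (f + g).intDegree = f.intDegree := by
  rcases h with h | h
  · simp [h, hf]
  have hg0 : f + g ≠ 0 := by
    intro h0
    have hgf : g = -f := by linear_combination h0
    rw [hgf, intDegree_neg] at h
    exact lt_irrefl _ h
  refine ⟨hg0, ?_⟩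
  by_cases hg : g = 0
  · simp [hg]
  have h1 : (f + g).intDegree ≤ f.intDegree := by
    have := intDegree_add_le hg hg0
    omega
  have h2 : f.intDegree ≤ max ((f + g).intDegree) ((-g).intDegree) := by
    have h3 := intDegree_add_le (x := f + g) (y := -g) (neg_ne_zero.mpr hg)
      (by simpa using hf)
    simpa using h3
  rw [intDegree_neg] at h2
  omega

open RatFunc in
lemma aux_intDegree_inv {f : RatFunc ℚ} (hf : f ≠ 0) : intDegree f⁻¹ = -intDegree f := by
  have := intDegree_mul hf (inv_ne_zero hf)
  rw [mul_inv_cancel₀ hf, intDegree_one] at this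
  omega

open RatFunc in
lemma aux_sum_inv {ι : Type*} (s : Finset ι) (g : ι → RatFunc ℚ)
    (h : ∀ i ∈ s, g i ≠ 0 ∧ intDegree (g i) = -1) :
    (∑ i ∈ s, g i) = 0 ∨ ((∑ i ∈ s, g i) ≠ 0 ∧ (∑ i ∈ s, g i).intDegree ≤ -1) := by
  classical
  induction s using Finset.induction_on with
  | empty => simp
  | @insert a s ha ih =>
    rw [Finset.sum_insert ha]
    have hga := h a (Finset.mem_insert_self a s)
    rcases ih (fun i hi => h i (Finset.mem_insert_of_mem hi)) with h0 | ⟨hne, hle⟩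
    · rw [h0, add_zero]
      exact Or.inr ⟨hga.1, le_of_eq hga.2⟩
    · by_cases hz : g a + ∑ i ∈ s, g i = 0
      · exact Or.inl hz
      · refine Or.inr ⟨hz, ?_⟩
        have := intDegree_add_le hne hz
        omega

lemma mem_children_iff {n : ℕ} (T : ParentTree n) {v w : Fin (n + 1)} :
    w ∈ T.children v ↔ T.parent w = v ∧ w ≠ v := by
  simp [ParentTree.children]

lemma lt_of_mem_children {n : ℕ} (T : ParentTree n) {v w : Fin (n + 1)}
    (h : w ∈ T.children v) : v < w := by
  rw [mem_children_iff] at h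
  rcases eq_or_ne w 0 with rfl | h0
  · exact absurd (T.parent_zero.symm.trans h.1) h.2
  · exact h.1 ▸ T.parent_lt w h0

open RatFunc in
lemma F_ne_zero {n : ℕ} (T : ParentTree n) (β : Fin (n + 1) → ℤ)
    (F : Fin (n + 1) → RatFunc ℚ)
    (hF : ∀ v, F v = RatFunc.X - (β v : RatFunc ℚ) - ∑ w ∈ T.children v, (F w)⁻¹) :
    ∀ v, F v ≠ 0 ∧ intDegree (F v) = 1 := by
  have key : ∀ k : ℕ, ∀ v : Fin (n + 1), n - v.val < k → F v ≠ 0 ∧ intDegree (F v) = 1 := by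
    intro k
    induction k with
    | zero => intro v h; omega
    | succ k ih =>
      intro v _hv
      have hchild : ∀ w ∈ T.children v, (fun w => (F w)⁻¹) w ≠ 0 ∧
          intDegree ((fun w => (F w)⁻¹) w) = -1 := by
        intro w hw
        have hlt := lt_of_mem_children T hw
        have hwn := w.isLt
        have hw' := ih w (by omega)
        exact ⟨inv_ne_zero hw'.1, by rw [aux_intDegree_inv hw'.1, hw'.2]⟩
      have hX : (RatFunc.X - (β v : RatFunc ℚ)) ≠ 0 ∧
          intDegree (RatFunc.X - (β v : RatFunc ℚ)) = 1 := by
        have hc : (-(β v : RatFunc ℚ)) = 0 ∨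
            intDegree (-(β v : RatFunc ℚ)) < intDegree (RatFunc.X : RatFunc ℚ) := by
          rcases eq_or_ne (β v) 0 with h0 | h0
          · left; simp [h0]
          · right
            rw [intDegree_neg, intDegree_X, ← map_intCast (RatFunc.C (K := ℚ)) (β v),
              intDegree_C]
            norm_num
        have := aux_intDegree_add RatFunc.X_ne_zero hc
        rw [← sub_eq_add_neg] at this
        rw [this.2, intDegree_X]
        exact ⟨this.1, rfl⟩
      have hS := aux_sum_inv (T.children v) (fun w => (F w)⁻¹) hchild
      have hg : (-(∑ w ∈ T.children v, (F w)⁻¹)) = 0 ∨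
          intDegree (-(∑ w ∈ T.children v, (F w)⁻¹)) <
            intDegree (RatFunc.X - (β v : RatFunc ℚ)) := by
        rcases hS with h0 | ⟨hsne, hsle⟩
        · left; simp [h0]
        · right
          have hsle' : (∑ w ∈ T.children v, (F w)⁻¹).intDegree ≤ -1 := hsle
          rw [intDegree_neg, hX.2]; omega
      have hmain := aux_intDegree_add hX.1 hg
      rw [← sub_eq_add_neg] at hmain
      rw [hF v]
      exact ⟨hmain.1, hmain.2.trans hX.2⟩
  intro v
  exact key (n + 1) v (by omega)

set_option synthInstance.maxHeartbeats 1000000 in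
set_option maxHeartbeats 2000000 in
lemma main_det : ∀ (n : ℕ) (T : ParentTree n) (β F : Fin (n + 1) → RatFunc ℚ)
    (ε : RatFunc ℚ), ε * ε = 1 →
    (∀ v, F v = RatFunc.X - β v - ∑ w ∈ T.children v, (F w)⁻¹) →
    (∀ v, F v ≠ 0) →
    (Matrix.of fun i j => (if i = j then RatFunc.X - β i else 0)
        - ε * T.adjMat (RatFunc ℚ) i j).det = ∏ v, F v := by
  intro n
  induction n with
  | zero =>
    intro T β F ε hε hF hne
    have hc : T.children 0 = ∅ := by
      apply Finset.eq_empty_of_forall_notMem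
      intro w hw
      have h1 := lt_of_mem_children T hw
      have h2 : w = 0 := by omega
      rw [h2] at h1
      exact lt_irrefl _ h1
    have h00 : T.adjMat (RatFunc ℚ) 0 0 = 0 := by
      simp [ParentTree.adjMat]
    rw [Matrix.det_fin_one]
    rw [Fin.prod_univ_one, hF 0, hc]
    simp [h00]
  | succ n ih =>
    intro T β F ε hε hF hne
    set ℓ : Fin (n + 1 + 1) := Fin.last (n + 1) with hℓdef
    have hℓ0 : ℓ ≠ 0 := by
      simp only [hℓdef, ne_eq, Fin.ext_iff, Fin.val_last, Fin.val_zero]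
      omega
    have hpℓ : T.parent ℓ < ℓ := T.parent_lt ℓ hℓ0
    set p : Fin (n + 1 + 1) := T.parent ℓ with hpdef
    have hpne : p ≠ ℓ := ne_of_lt hpℓ
    have hleaf : T.children ℓ = ∅ := by
      apply Finset.eq_empty_of_forall_notMem
      intro w hw
      exact absurd (lt_of_mem_children T hw) (Fin.le_last w).not_gt
    have hFℓ : F ℓ = RatFunc.X - β ℓ := by rw [hF ℓ, hleaf]; simp
    have hnoparℓ : ∀ j : Fin (n + 1 + 1), T.parent j ≠ ℓ := by
      intro j
      rcases eq_or_ne j 0 with rfl | h0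
      · rw [T.parent_zero]; exact Ne.symm hℓ0
      · exact ne_of_lt (lt_of_lt_of_le (T.parent_lt j h0) (Fin.le_last j))
    -- the smaller tree
    have hplt : ∀ i : Fin (n + 1), (T.parent i.castSucc).val < n + 1 := by
      intro i
      rcases eq_or_ne i 0 with rfl | h0
      · have h1 : T.parent (Fin.castSucc 0) = 0 := by
          rw [Fin.castSucc_zero, T.parent_zero]
        rw [h1]; simp
      · have h2 : (i.castSucc : Fin (n + 1 + 1)) ≠ 0 := by
          intro h; apply h0; rw [← Fin.castSucc_zero] at h; exact Fin.castSucc_injective _ h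
        have h4 : (T.parent i.castSucc).val < i.castSucc.val := T.parent_lt i.castSucc h2
        have h5 : i.val < n + 1 := i.isLt
        simp only [Fin.coe_castSucc] at h4
        omega
    obtain ⟨T', hT'⟩ : ∃ T' : ParentTree n,
        ∀ i : Fin (n + 1), (T'.parent i).val = (T.parent i.castSucc).val := by
      refine ⟨{ parent := fun i => ⟨(T.parent i.castSucc).val, hplt i⟩,
                parent_lt := ?_, parent_zero := ?_ }, fun i => rfl⟩
      · intro i hi
        have h2 : (i.castSucc : Fin (n + 1 + 1)) ≠ 0 := by
          intro h; apply hi; rw [← Fin.castSucc_zero] at h; exact Fin.castSucc_injective _ h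
        simpa [Fin.lt_def] using T.parent_lt i.castSucc h2
      · apply Fin.ext
        simp [T.parent_zero]
    have hT'par : ∀ i j : Fin (n + 1),
        T'.parent i = j ↔ T.parent i.castSucc = j.castSucc := by
      intro i j
      rw [Fin.ext_iff, Fin.ext_iff, hT' i, Fin.coe_castSucc]
    have hadj : ∀ i j : Fin (n + 1),
        T'.adjMat (RatFunc ℚ) i j = T.adjMat (RatFunc ℚ) i.castSucc j.castSucc := by
      intro i j
      simp only [ParentTree.adjMat, Matrix.of_apply]
      apply if_congr _ rfl rfl
      rw [ne_eq, ne_eq, Fin.castSucc_inj, hT'par i j, hT'par j i]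
    -- children relations
    have hmemlast : ∀ v : Fin (n + 1), ℓ ∈ T.children v.castSucc ↔ v.castSucc = p := by
      intro v
      rw [mem_children_iff, hpdef]
      constructor
      · rintro ⟨h1, _⟩; exact h1.symm
      · intro h
        exact ⟨h.symm, (hℓdef ▸ (Fin.castSucc_lt_last v)).ne'⟩
    have hc : ∀ v : Fin (n + 1),
        (T.children v.castSucc).erase ℓ = (T'.children v).image Fin.castSucc := by
      intro v
      ext w
      simp only [Finset.mem_erase, mem_children_iff, Finset.mem_image]
      constructor
      · rintro ⟨hwℓ, hpar, hwv⟩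
        have hwℓ' : w ≠ Fin.last (n + 1) := hℓdef ▸ hwℓ
        refine ⟨w.castPred hwℓ', ⟨?_, ?_⟩, Fin.castSucc_castPred w hwℓ'⟩
        · rw [hT'par, Fin.castSucc_castPred]
          exact hpar
        · intro hh
          apply hwv
          rw [← Fin.castSucc_castPred w hwℓ', hh]
      · rintro ⟨u, ⟨hpar, huv⟩, rfl⟩
        rw [hT'par] at hpar
        refine ⟨(hℓdef ▸ (Fin.castSucc_lt_last u)).ne, hpar, ?_⟩
        rw [ne_eq, Fin.castSucc_inj]
        exact huv
    have hsplit : ∀ v : Fin (n + 1), ∑ w ∈ T.children v.castSucc, (F w)⁻¹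
        = (if v.castSucc = p then (F ℓ)⁻¹ else 0)
          + ∑ u ∈ T'.children v, (F u.castSucc)⁻¹ := by
      intro v
      have himg : ∑ w ∈ (T.children v.castSucc).erase ℓ, (F w)⁻¹
          = ∑ u ∈ T'.children v, (F u.castSucc)⁻¹ := by
        rw [hc v]
        exact Finset.sum_image fun a _ b _ h => Fin.castSucc_injective _ h
      by_cases hp : v.castSucc = p
      · rw [if_pos hp, ← Finset.add_sum_erase _ _ ((hmemlast v).mpr hp), himg]
      · rw [if_neg hp, zero_add, ← himg,
          Finset.erase_eq_of_notMem fun hmem => hp ((hmemlast v).mp hmem)]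
    -- apply the induction hypothesis
    have hih := ih T' (fun i => β i.castSucc + if i.castSucc = p then (F ℓ)⁻¹ else 0)
      (fun i => F i.castSucc) ε hε ?_ ?_
    case refine_1 =>
      intro v
      beta_reduce
      rw [hF v.castSucc, hsplit v]
      ring
    case refine_2 => exact fun v => hne _
    -- matrix bookkeeping
    set M : Matrix (Fin (n + 1 + 1)) (Fin (n + 1 + 1)) (RatFunc ℚ) :=
      Matrix.of fun i j => (if i = j then RatFunc.X - β i else 0)
        - ε * T.adjMat (RatFunc ℚ) i j with hM
    have hadjdiag : ∀ i : Fin (n + 1 + 1), T.adjMat (RatFunc ℚ) i i = 0 := by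
      intro i; simp [ParentTree.adjMat]
    have hMℓℓ : M ℓ ℓ = F ℓ := by
      rw [hM, hFℓ]
      simp [hadjdiag ℓ]
    have hMrow : ∀ j : Fin (n + 1 + 1), j ≠ ℓ → M ℓ j = if j = p then -ε else 0 := by
      intro j hj
      have hadjval : T.adjMat (RatFunc ℚ) ℓ j = if j = p then 1 else 0 := by
        simp only [ParentTree.adjMat, Matrix.of_apply]
        by_cases hjp : j = p
        · rw [if_pos ⟨Ne.symm hj, Or.inl (hjp ▸ hpdef.symm)⟩, if_pos hjp]
        · rw [if_neg, if_neg hjp]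
          rintro ⟨-, h2 | h3⟩
          · exact hjp (h2 ▸ hpdef)
          · exact hnoparℓ j h3
      rw [hM]
      simp only [Matrix.of_apply, hadjval, if_neg (Ne.symm hj)]
      by_cases hjp : j = p <;> simp [hjp]
    have hMcol : ∀ i : Fin (n + 1 + 1), i ≠ ℓ → M i ℓ = if i = p then -ε else 0 := by
      intro i hi
      have hadjval : T.adjMat (RatFunc ℚ) i ℓ = if i = p then 1 else 0 := by
        simp only [ParentTree.adjMat, Matrix.of_apply]
        by_cases hip : i = p
        · rw [if_pos ⟨hi, Or.inr (hip ▸ hpdef.symm)⟩, if_pos hip]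
        · rw [if_neg, if_neg hip]
          rintro ⟨-, h2 | h3⟩
          · exact hnoparℓ i h2
          · exact hip (h3 ▸ hpdef)
      rw [hM]
      simp only [Matrix.of_apply, hadjval, if_neg hi]
      by_cases hip : i = p <;> simp [hip]
    set M₁ : Matrix (Fin (n + 1 + 1)) (Fin (n + 1 + 1)) (RatFunc ℚ) :=
      M.updateRow p (M p + (ε * (F ℓ)⁻¹) • M ℓ) with hM₁
    have hdet1 : M₁.det = M.det := Matrix.det_updateRow_add_smul_self M hpne _
    have hM₁col : ∀ i : Fin (n + 1 + 1), i ≠ ℓ → M₁ i ℓ = 0 := by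
      intro i hi
      by_cases hip : i = p
      · rw [hM₁, hip, Matrix.updateRow_self]
        simp only [Pi.add_apply, Pi.smul_apply, smul_eq_mul]
        rw [hMcol p hpne, if_pos rfl, hMℓℓ, mul_assoc, inv_mul_cancel₀ (hne ℓ), mul_one]
        ring
      · rw [hM₁, Matrix.updateRow_ne hip, hMcol i hi, if_neg hip]
    have hsub : M₁.submatrix Fin.castSucc Fin.castSucc
        = Matrix.of fun i j => (if i = j then RatFunc.X
              - (β i.castSucc + if i.castSucc = p then (F ℓ)⁻¹ else 0) else 0)
            - ε * T'.adjMat (RatFunc ℚ) i j := by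
      ext i j
      have hjℓ : (j.castSucc : Fin (n + 1 + 1)) ≠ ℓ := (hℓdef ▸ (Fin.castSucc_lt_last j)).ne
      simp only [Matrix.submatrix_apply, Matrix.of_apply]
      by_cases hip : (i.castSucc : Fin (n + 1 + 1)) = p
      · rw [hM₁, hip, Matrix.updateRow_self]
        simp only [Pi.add_apply, Pi.smul_apply, smul_eq_mul]
        rw [hMrow j.castSucc hjℓ]
        by_cases hij : i = j
        · subst hij
          rw [hM, hadj, ← hip]
          simp only [Matrix.of_apply, if_pos rfl, if_true, hadjdiag, mul_zero, sub_zero]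
          linear_combination (-(F ℓ)⁻¹) * hε
        · have hjp : (j.castSucc : Fin (n + 1 + 1)) ≠ p :=
            fun h => hij (Fin.castSucc_injective _ (hip.trans h.symm))
          rw [if_neg hjp, mul_zero, add_zero, hM, if_neg hij, hadj, ← hip]
          simp only [Matrix.of_apply]
          rw [if_neg (show ¬ (i.castSucc : Fin (n + 1 + 1)) = j.castSucc from
            fun h => hij (Fin.castSucc_injective _ h))]
      · rw [hM₁, Matrix.updateRow_ne hip, hM]
        simp only [Matrix.of_apply]
        rw [if_neg hip, add_zero, hadj]
        by_cases hij : i = j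
        · subst hij
          rw [if_pos rfl, if_pos rfl]
        · rw [if_neg hij, if_neg (show ¬ (i.castSucc : Fin (n + 1 + 1)) = j.castSucc from
            fun h => hij (Fin.castSucc_injective _ h))]
    have hdet2 : M₁.det = F ℓ * (M₁.submatrix Fin.castSucc Fin.castSucc).det := by
      rw [Matrix.det_succ_column M₁ ℓ]
      rw [Fintype.sum_eq_single ℓ (fun i hi => by rw [hM₁col i hi]; ring)]
      rw [hM₁, Matrix.updateRow_ne (Ne.symm hpne)]
      rw [show ((ℓ : Fin (n + 1 + 1)).val + (ℓ : Fin (n + 1 + 1)).val) = 2 * ℓ.val by ring]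
      rw [pow_mul, neg_one_sq, one_pow, one_mul, ← hM₁]
      have hsuccAbove : (ℓ : Fin (n + 1 + 1)).succAbove = Fin.castSucc := by
        rw [hℓdef]; exact Fin.succAbove_last
      rw [hsuccAbove, hMℓℓ]
    -- conclude
    show M.det = ∏ v, F v
    rw [← hdet1, hdet2, hsub, hih, Fin.prod_univ_castSucc (f := F), mul_comm]

theorem stmt_6 {n : ℕ} (T : ParentTree n) (β : Fin (n + 1) → ℤ)
    (F : Fin (n + 1) → RatFunc ℚ)
    (hF : ∀ v, F v = RatFunc.X - (β v : RatFunc ℚ) - ∑ w ∈ T.children v, (F w)⁻¹) :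
    algebraMap (Polynomial ℚ) (RatFunc ℚ)
        (T.adjMat ℚ + Matrix.diagonal (fun v => (β v : ℚ))).charpoly = ∏ v, F v ∧
    algebraMap (Polynomial ℚ) (RatFunc ℚ)
        (-T.adjMat ℚ + Matrix.diagonal (fun v => (β v : ℚ))).charpoly = ∏ v, F v := by
  have hnz := F_ne_zero T β F hF
  have hne : ∀ v, F v ≠ 0 := fun v => (hnz v).1
  have hadjd : ∀ i : Fin (n + 1), T.adjMat ℚ i i = 0 := by
    intro i; simp [ParentTree.adjMat]
  constructor
  · show algebraMap (Polynomial ℚ) (RatFunc ℚ)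
      (Matrix.charmatrix (T.adjMat ℚ + Matrix.diagonal fun v => (β v : ℚ))).det = ∏ v, F v
    rw [RingHom.map_det]
    have hmat : (Matrix.charmatrix (T.adjMat ℚ + Matrix.diagonal fun v => (β v : ℚ))).map
        (algebraMap (Polynomial ℚ) (RatFunc ℚ))
        = Matrix.of fun i j => (if i = j then RatFunc.X - ((β i : ℤ) : RatFunc ℚ) else 0)
            - (1 : RatFunc ℚ) * T.adjMat (RatFunc ℚ) i j := by
      ext i j
      by_cases hij : i = j
      · subst hij
        have h1 : (T.adjMat ℚ + Matrix.diagonal fun v => ((β v : ℤ) : ℚ)) i i = ((β i : ℤ) : ℚ) := by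
          rw [Matrix.add_apply, Matrix.diagonal_apply_eq, hadjd, zero_add]
        rw [Matrix.map_apply, Matrix.charmatrix_apply_eq, h1, map_sub,
          RatFunc.algebraMap_X, RatFunc.algebraMap_C, Matrix.of_apply, if_pos rfl]
        have h2 : T.adjMat (RatFunc ℚ) i i = 0 := by simp [ParentTree.adjMat]
        rw [h2, mul_zero, sub_zero, map_intCast (RatFunc.C (K := ℚ)) (β i)]
      · have h1 : (T.adjMat ℚ + Matrix.diagonal fun v => ((β v : ℤ) : ℚ)) i j
            = T.adjMat ℚ i j := by
          rw [Matrix.add_apply, Matrix.diagonal_apply_ne _ hij, add_zero]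
        rw [Matrix.map_apply, Matrix.charmatrix_apply_ne _ _ _ hij, h1, Matrix.of_apply,
          if_neg hij, zero_sub]
        simp only [ParentTree.adjMat, Matrix.of_apply]
        split_ifs <;> simp
    rw [RingHom.mapMatrix_apply, hmat]
    exact main_det n T (fun v => ((β v : ℤ) : RatFunc ℚ)) F 1 (by ring) hF hne
  · show algebraMap (Polynomial ℚ) (RatFunc ℚ)
      (Matrix.charmatrix (-T.adjMat ℚ + Matrix.diagonal fun v => (β v : ℚ))).det = ∏ v, F v
    rw [RingHom.map_det]
    have hmat : (Matrix.charmatrix (-T.adjMat ℚ + Matrix.diagonal fun v => (β v : ℚ))).map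
        (algebraMap (Polynomial ℚ) (RatFunc ℚ))
        = Matrix.of fun i j => (if i = j then RatFunc.X - ((β i : ℤ) : RatFunc ℚ) else 0)
            - (-1 : RatFunc ℚ) * T.adjMat (RatFunc ℚ) i j := by
      ext i j
      by_cases hij : i = j
      · subst hij
        have h1 : (-T.adjMat ℚ + Matrix.diagonal fun v => ((β v : ℤ) : ℚ)) i i
            = ((β i : ℤ) : ℚ) := by
          rw [Matrix.add_apply, Matrix.diagonal_apply_eq, Matrix.neg_apply, hadjd, neg_zero,
            zero_add]
        rw [Matrix.map_apply, Matrix.charmatrix_apply_eq, h1, map_sub,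
          RatFunc.algebraMap_X, RatFunc.algebraMap_C, Matrix.of_apply, if_pos rfl]
        have h2 : T.adjMat (RatFunc ℚ) i i = 0 := by simp [ParentTree.adjMat]
        rw [h2, mul_zero, sub_zero, map_intCast (RatFunc.C (K := ℚ)) (β i)]
      · have h1 : (-T.adjMat ℚ + Matrix.diagonal fun v => ((β v : ℤ) : ℚ)) i j
            = -T.adjMat ℚ i j := by
          rw [Matrix.add_apply, Matrix.diagonal_apply_ne _ hij, add_zero, Matrix.neg_apply]
        rw [Matrix.map_apply, Matrix.charmatrix_apply_ne _ _ _ hij, h1, Matrix.of_apply,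
          if_neg hij, zero_sub]
        simp only [ParentTree.adjMat, Matrix.of_apply]
        split_ifs <;> simp
    rw [RingHom.mapMatrix_apply, hmat]
    exact main_det n T (fun v => ((β v : ℤ) : RatFunc ℚ)) F (-1) (by ring) hF hne
end

section
/- For the Bethe tree B_{d,k} with d ≥ 3 and k ≥ 1, the set of distinct eigenvalues of its adjacency matrix equals { 2√(d-1)·cos(hπ/(j+1)) : 1 ≤ h ≤ j ≤ k }. -/
open Polynomial

/-! ### Auxiliary lemmas -/

/-- Scaled Chebyshev-like sequence: `P 0 = 1`, `P 1 = x`, `P (m+2) = x P (m+1) - c P m`. -/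
def cheb (c x : ℝ) : ℕ → ℝ
  | 0 => 1
  | 1 => x
  | (m + 2) => x * cheb c x (m + 1) - c * cheb c x m

lemma cheb_sin (e θ : ℝ) : ∀ m : ℕ,
    cheb (e ^ 2) (2 * e * Real.cos θ) m * Real.sin θ = e ^ m * Real.sin (((m : ℝ) + 1) * θ) := by
  have key : ∀ m : ℕ,
      cheb (e ^ 2) (2 * e * Real.cos θ) m * Real.sin θ = e ^ m * Real.sin (((m : ℝ) + 1) * θ) ∧
      cheb (e ^ 2) (2 * e * Real.cos θ) (m + 1) * Real.sin θ
        = e ^ (m + 1) * Real.sin (((m : ℝ) + 2) * θ) := by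
    intro m
    induction m with
    | zero =>
      refine ⟨by simp [cheb], ?_⟩
      show 2 * e * Real.cos θ * Real.sin θ = e ^ 1 * Real.sin (((0 : ℕ) + 2 : ℝ) * θ)
      have : (((0 : ℕ) : ℝ) + 2) * θ = θ + θ := by push_cast; ring
      rw [this, Real.sin_add]; ring
    | succ m ih =>
      obtain ⟨e1, e2⟩ := ih
      constructor
      · convert e2 using 4; push_cast; ring
      · show (2 * e * Real.cos θ * cheb (e ^ 2) (2 * e * Real.cos θ) (m + 1)
          - e ^ 2 * cheb (e ^ 2) (2 * e * Real.cos θ) m) * Real.sin θ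
          = e ^ (m + 2) * Real.sin ((((m + 1 : ℕ) : ℝ) + 2) * θ)
        have hs3 : Real.sin ((((m + 1 : ℕ) : ℝ) + 2) * θ)
            = 2 * Real.cos θ * Real.sin (((m : ℝ) + 2) * θ) - Real.sin (((m : ℝ) + 1) * θ) := by
          have h3 : (((m + 1 : ℕ) : ℝ) + 2) * θ = ((m : ℝ) + 2) * θ + θ := by push_cast; ring
          have h1 : ((m : ℝ) + 1) * θ = ((m : ℝ) + 2) * θ - θ := by ring
          rw [h3, h1, Real.sin_add, Real.sin_sub]; ring
        rw [hs3]
        linear_combination (2 * e * Real.cos θ) * e2 - e ^ 2 * e1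
  exact fun m => (key m).1

lemma cheb_grow {e x : ℝ} (he : 0 < e) (hx : 2 * e ≤ x) :
    ∀ m : ℕ, 0 < cheb (e ^ 2) x m ∧ e * cheb (e ^ 2) x m ≤ cheb (e ^ 2) x (m + 1) := by
  intro m
  induction m with
  | zero =>
    refine ⟨by simp [cheb], ?_⟩
    show e * 1 ≤ x
    nlinarith
  | succ m ih =>
    obtain ⟨h1, h2⟩ := ih
    have hpos : 0 < cheb (e ^ 2) x (m + 1) := lt_of_lt_of_le (by positivity) h2
    refine ⟨hpos, ?_⟩
    show e * cheb (e ^ 2) x (m + 1) ≤ x * cheb (e ^ 2) x (m + 1) - e ^ 2 * cheb (e ^ 2) x m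
    nlinarith

lemma cheb_neg (c x : ℝ) : ∀ m : ℕ, cheb c (-x) m = (-1) ^ m * cheb c x m := by
  have key : ∀ m : ℕ, cheb c (-x) m = (-1) ^ m * cheb c x m ∧
      cheb c (-x) (m + 1) = (-1) ^ (m + 1) * cheb c x (m + 1) := by
    intro m
    induction m with
    | zero => exact ⟨by simp [cheb], by simp [cheb]⟩
    | succ m ih =>
      refine ⟨ih.2, ?_⟩
      show -x * cheb c (-x) (m + 1) - c * cheb c (-x) m
        = (-1) ^ (m + 2) * (x * cheb c x (m + 1) - c * cheb c x m)
      rw [ih.1, ih.2]; ring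
  exact fun m => (key m).1

lemma cheb_root_iff {e : ℝ} (he : 0 < e) (j : ℕ) (hj : 1 ≤ j) (x : ℝ) :
    cheb (e ^ 2) x j = 0 ↔
      ∃ h : ℕ, 1 ≤ h ∧ h ≤ j ∧ x = 2 * e * Real.cos (h * Real.pi / (j + 1)) := by
  constructor
  · intro hroot
    have hlt : x < 2 * e := by
      by_contra hge
      exact absurd hroot (ne_of_gt (cheb_grow he (le_of_not_gt hge) j).1)
    have hgt : -(2 * e) < x := by
      by_contra hge
      have h2 : 2 * e ≤ -x := by linarith [le_of_not_gt hge]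
      have hpos := (cheb_grow he h2 j).1
      have hrw : cheb (e ^ 2) x j = (-1) ^ j * cheb (e ^ 2) (-x) j := by
        have := cheb_neg (e ^ 2) (-x) j
        simpa using this
      rw [hrw] at hroot
      rcases mul_eq_zero.mp hroot with h | h
      · exact absurd h (pow_ne_zero _ (by norm_num))
      · exact absurd h (ne_of_gt hpos)
    set θ := Real.arccos (x / (2 * e)) with hθdef
    have h2e : (0:ℝ) < 2 * e := by linarith
    have hb1 : -1 < x / (2 * e) := by rw [lt_div_iff₀ h2e]; linarith
    have hb2 : x / (2 * e) < 1 := by rw [div_lt_one h2e]; linarith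
    have hθ1 : 0 < θ := Real.arccos_pos.mpr hb2
    have hθ2 : θ < Real.pi := lt_of_le_of_ne (Real.arccos_le_pi _)
      (fun hc => absurd (Real.arccos_eq_pi.mp hc) (by linarith))
    have hcos : Real.cos θ = x / (2 * e) := Real.cos_arccos (le_of_lt hb1) (le_of_lt hb2)
    have hx : x = 2 * e * Real.cos θ := by rw [hcos]; field_simp
    have hsinθ : 0 < Real.sin θ := Real.sin_pos_of_pos_of_lt_pi hθ1 hθ2
    have hkey := cheb_sin e θ j
    rw [← hx, hroot, zero_mul] at hkey
    have hsinj : Real.sin (((j : ℝ) + 1) * θ) = 0 := by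
      rcases mul_eq_zero.mp hkey.symm with h | h
      · exact absurd h (pow_ne_zero _ (by positivity))
      · exact h
    obtain ⟨m, hm⟩ := Real.sin_eq_zero_iff.mp hsinj
    have hπ : (0:ℝ) < Real.pi := Real.pi_pos
    have hjθ1 : 0 < ((j:ℝ) + 1) * θ := by positivity
    have hjθ2 : ((j:ℝ) + 1) * θ < ((j:ℝ) + 1) * Real.pi := by
      apply mul_lt_mul_of_pos_left hθ2; positivity
    have hm1 : (0:ℝ) < (m:ℝ) := by
      by_contra hm0
      push_neg at hm0
      nlinarith [hm]
    have hm2 : (m:ℝ) < (j:ℝ) + 1 := by nlinarith [hm]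
    lift m to ℕ using (by exact_mod_cast le_of_lt hm1 : (0:ℤ) ≤ m) with m'
    refine ⟨m', by exact_mod_cast hm1, ?_, ?_⟩
    · have h1 : (m' : ℝ) < (j:ℝ) + 1 := by exact_mod_cast hm2
      exact Nat.lt_succ_iff.mp (by exact_mod_cast h1)
    · have hθval : θ = (m' : ℝ) * Real.pi / ((j:ℝ) + 1) := by
        rw [eq_div_iff (ne_of_gt (by positivity : (0:ℝ) < (j:ℝ) + 1))]
        push_cast at hm
        linear_combination -hm
      rw [hx, hθval]
  · rintro ⟨h, hh1, hh2, hxval⟩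
    set θ := (h : ℝ) * Real.pi / ((j : ℝ) + 1) with hθdef
    have hπ : (0:ℝ) < Real.pi := Real.pi_pos
    have hθ1 : 0 < θ := by
      apply div_pos
      · have : (0:ℝ) < (h:ℝ) := by exact_mod_cast hh1
        positivity
      · positivity
    have hθ2 : θ < Real.pi := by
      rw [hθdef, div_lt_iff₀ (by positivity : (0:ℝ) < (j:ℝ) + 1)]
      have : (h:ℝ) ≤ (j:ℝ) := by exact_mod_cast hh2
      nlinarith
    have hsinθ : Real.sin θ ≠ 0 := ne_of_gt (Real.sin_pos_of_pos_of_lt_pi hθ1 hθ2)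
    have hkey := cheb_sin e θ j
    have hjθ : ((j:ℝ) + 1) * θ = (h:ℝ) * Real.pi := by
      rw [hθdef]; field_simp
    rw [hjθ, Real.sin_nat_mul_pi, mul_zero] at hkey
    rw [hxval]
    exact (mul_eq_zero.mp hkey).resolve_right hsinθ

lemma cheb_key (e θ : ℝ) (he : e ≠ 0) (i : ℕ) :
    (2 * e * Real.cos θ) * (Real.sin (((i + 1 : ℕ) : ℝ) * θ) / e ^ (i + 1))
      = Real.sin ((i : ℝ) * θ) / e ^ i
        + e ^ 2 * (Real.sin (((i + 2 : ℕ) : ℝ) * θ) / e ^ (i + 2)) := by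
  have hs : Real.sin (((i + 2 : ℕ) : ℝ) * θ)
      = 2 * Real.cos θ * Real.sin (((i + 1 : ℕ) : ℝ) * θ) - Real.sin ((i : ℝ) * θ) := by
    have h1 : ((i + 2 : ℕ) : ℝ) * θ = ((i + 1 : ℕ) : ℝ) * θ + θ := by push_cast; ring
    have h2 : ((i : ℕ) : ℝ) * θ = ((i + 1 : ℕ) : ℝ) * θ - θ := by push_cast; ring
    rw [h1, h2, Real.sin_add, Real.sin_sub]; ring
  rw [hs]
  field_simp
  ring

lemma charpoly_isRoot_iff {m : ℕ} (A : Matrix (Fin m) (Fin m) ℝ) (x : ℝ) :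
    A.charpoly.IsRoot x ↔ ∃ f : Fin m → ℝ, f ≠ 0 ∧ A.mulVec f = x • f := by
  have h1 : A.charpoly.eval x = ((Matrix.charmatrix A).map (eval x)).det := by
    rw [Matrix.charpoly, ← coe_evalRingHom, RingHom.map_det]; rfl
  have h2 : (Matrix.charmatrix A).map (eval x) = x • (1 : Matrix (Fin m) (Fin m) ℝ) - A := by
    ext i j
    by_cases h : i = j
    · subst h; simp [Matrix.charmatrix_apply_eq, Matrix.one_apply]
    · simp [Matrix.charmatrix_apply_ne _ _ _ h, Matrix.one_apply, h]
  rw [IsRoot, h1, h2, ← Matrix.exists_mulVec_eq_zero_iff]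
  constructor
  · rintro ⟨v, hv, hmul⟩
    refine ⟨v, hv, ?_⟩
    rw [Matrix.sub_mulVec, Matrix.smul_mulVec, Matrix.one_mulVec, sub_eq_zero] at hmul
    exact hmul.symm
  · rintro ⟨f, hf, hmul⟩
    exact ⟨f, hf, by
      rw [Matrix.sub_mulVec, Matrix.smul_mulVec, Matrix.one_mulVec, hmul, sub_self]⟩

lemma sumAdj {n : ℕ} (T : ParentTree n) (f : Fin (n+1) → ℝ) (v : Fin (n+1)) :
    (T.adjMat ℝ).mulVec f v
      = (∑ w ∈ T.children v, f w) + (if v = 0 then 0 else f (T.parent v)) := by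
  classical
  have h0 : (T.adjMat ℝ).mulVec f v
      = ∑ w : Fin (n+1), (if v ≠ w ∧ (T.parent v = w ∨ T.parent w = v) then (1:ℝ) else 0) * f w := by
    simp [Matrix.mulVec, dotProduct, ParentTree.adjMat]
  rw [h0]
  have h1 : ∑ w : Fin (n+1), (if v ≠ w ∧ (T.parent v = w ∨ T.parent w = v) then (1:ℝ) else 0) * f w
      = ∑ w ∈ Finset.univ.filter (fun w => v ≠ w ∧ (T.parent v = w ∨ T.parent w = v)), f w := by
    rw [Finset.sum_filter]
    apply Finset.sum_congr rfl
    intro w _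
    split <;> simp
  rw [h1]
  by_cases hv0 : v = 0
  · subst hv0
    rw [if_pos rfl, add_zero]
    apply Finset.sum_congr _ (fun _ _ => rfl)
    ext w
    simp only [Finset.mem_filter, Finset.mem_univ, true_and, ParentTree.children]
    constructor
    · rintro ⟨hne, hor⟩
      rcases hor with h | h
      · exact absurd (T.parent_zero.symm.trans h) (fun hw => hne hw)
      · exact ⟨h, fun hw => hne hw.symm⟩
    · rintro ⟨hp, hw⟩; exact ⟨fun h => hw h.symm, Or.inr hp⟩
  · rw [if_neg hv0]
    have hsplit : Finset.univ.filter (fun w => v ≠ w ∧ (T.parent v = w ∨ T.parent w = v))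
        = T.children v ∪ {T.parent v} := by
      ext w
      simp only [Finset.mem_filter, Finset.mem_univ, true_and, Finset.mem_union,
        Finset.mem_singleton, ParentTree.children]
      constructor
      · rintro ⟨hne, hor⟩
        rcases hor with h | h
        · exact Or.inr h.symm
        · exact Or.inl ⟨h, fun hwv => hne hwv.symm⟩
      · rintro (⟨hp, hwv⟩ | rfl)
        · exact ⟨fun h => hwv h.symm, Or.inr hp⟩
        · exact ⟨ne_of_gt (T.parent_lt v hv0), Or.inl rfl⟩
    rw [hsplit, Finset.sum_union ?disj, Finset.sum_singleton]
    case disj =>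
      rw [Finset.disjoint_singleton_right]
      intro hmem
      rw [ParentTree.children, Finset.mem_filter] at hmem
      obtain ⟨-, hpp, hpv⟩ := hmem
      by_cases hp0 : T.parent v = 0
      · rw [hp0, T.parent_zero] at hpp
        exact hv0 hpp.symm
      · have h1 := T.parent_lt _ hp0
        have h2 := T.parent_lt v hv0
        rw [hpp] at h1
        exact absurd h2 (not_lt_of_gt h1)

theorem stmt_12 {n : ℕ} (T : ParentTree n)
    (lvl : Fin (n + 1) → ℕ)
    (hlvl0 : lvl 0 = 1)
    (hlvl : ∀ v, v ≠ 0 → lvl v = lvl (T.parent v) + 1)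
    (d k : ℕ) (hd : 3 ≤ d) (hk : 1 ≤ k)
    (hle : ∀ v, lvl v ≤ k)
    (hbethe : ∀ v, lvl v < k → (T.children v).card = d - 1)
    (hleaf : ∀ v, lvl v = k → (T.children v).card = 0) :
    {x : ℝ | (T.adjMat ℝ).charpoly.IsRoot x} =
      {x : ℝ | ∃ h j : ℕ, 1 ≤ h ∧ h ≤ j ∧ j ≤ k ∧
        x = 2 * Real.sqrt ((d : ℝ) - 1) * Real.cos (h * Real.pi / (j + 1))} := by
  classical
  have hdpos : (0:ℝ) < (d:ℝ) - 1 := by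
    have : (3:ℝ) ≤ (d:ℝ) := by exact_mod_cast hd
    linarith
  set e := Real.sqrt ((d:ℝ) - 1) with he_def
  have he : 0 < e := Real.sqrt_pos.mpr hdpos
  have he2 : e ^ 2 = (d:ℝ) - 1 := Real.sq_sqrt (le_of_lt hdpos)
  have hdcast : ((d - 1 : ℕ) : ℝ) = e ^ 2 := by
    rw [he2, Nat.cast_sub (by omega : 1 ≤ d)]; norm_num
  -- tree facts
  have lvl_pos : ∀ v : Fin (n+1), 1 ≤ lvl v := by
    intro v
    by_cases hv : v = 0
    · rw [hv, hlvl0]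
    · rw [hlvl v hv]; omega
  have hchild : ∀ v w : Fin (n+1), w ∈ T.children v → T.parent w = v ∧ w ≠ v :=
    fun v w hw => (Finset.mem_filter.mp hw).2
  have child_ne_zero : ∀ v w : Fin (n+1), w ∈ T.children v → w ≠ 0 := by
    intro v w hw hw0
    obtain ⟨hp, hne⟩ := hchild v w hw
    rw [hw0, T.parent_zero] at hp
    exact hne (hw0.trans hp)
  have child_lvl : ∀ v w : Fin (n+1), w ∈ T.children v → lvl w = lvl v + 1 := by
    intro v w hw
    obtain ⟨hp, _⟩ := hchild v w hw
    rw [hlvl w (child_ne_zero v w hw), hp]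
  ext x
  simp only [Set.mem_setOf_eq]
  rw [charpoly_isRoot_iff]
  have hRHS : (∃ h j : ℕ, 1 ≤ h ∧ h ≤ j ∧ j ≤ k ∧
      x = 2 * Real.sqrt ((d : ℝ) - 1) * Real.cos (h * Real.pi / (j + 1)))
      ↔ ∃ j, 1 ≤ j ∧ j ≤ k ∧ cheb (e^2) x j = 0 := by
    constructor
    · rintro ⟨h, j, hh, hhj, hjk, hx⟩
      exact ⟨j, le_trans hh hhj, hjk,
        (cheb_root_iff he j (le_trans hh hhj) x).mpr ⟨h, hh, hhj, hx⟩⟩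
    · rintro ⟨j, hj1, hjk, hroot⟩
      obtain ⟨h, hh1, hh2, hx⟩ := (cheb_root_iff he j hj1 x).mp hroot
      exact ⟨h, j, hh1, hh2, hjk, hx⟩
  rw [hRHS]
  constructor
  · -- eigenvector implies cheb root
    rintro ⟨f, hf0, hAf⟩
    by_contra hcon
    push_neg at hcon
    have hAf' : ∀ v, (∑ w ∈ T.children v, f w) + (if v = 0 then 0 else f (T.parent v))
        = x * f v := by
      intro v
      rw [← sumAdj]
      rw [congrFun hAf v]
      simp
    have hC : ∀ j : ℕ, ∀ v, v ≠ 0 → lvl v + j = k →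
        cheb (e^2) x (j+1) * f v = cheb (e^2) x j * f (T.parent v) := by
      intro j
      induction j with
      | zero =>
        intro v hv hl
        have hemp : T.children v = ∅ := Finset.card_eq_zero.mp (hleaf v (by omega))
        have heq := hAf' v
        rw [hemp, Finset.sum_empty, if_neg hv, zero_add] at heq
        show cheb (e^2) x 1 * f v = cheb (e^2) x 0 * f (T.parent v)
        simp only [cheb]
        linarith [heq]
      | succ j ih =>
        intro v hv hl
        have hlt : lvl v < k := by omega
        have hcard := hbethe v hlt
        have hne : cheb (e^2) x (j+1) ≠ 0 := hcon (j+1) (by omega) (by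
          have := lvl_pos v; omega)
        have hsum : ∑ w ∈ T.children v, f w
            = ((d-1 : ℕ) : ℝ) * (cheb (e^2) x j * f v / cheb (e^2) x (j+1)) := by
          rw [Finset.sum_congr rfl (fun w hw => ?_), Finset.sum_const, hcard, nsmul_eq_mul]
          have hw0 := child_ne_zero v w hw
          have hwl : lvl w + j = k := by have := child_lvl v w hw; omega
          have hiw := ih w hw0 hwl
          rw [(hchild v w hw).1] at hiw
          field_simp
          linarith [hiw]
        have heq := hAf' v
        rw [hsum, if_neg hv] at heq
        show cheb (e^2) x (j+2) * f v = cheb (e^2) x (j+1) * f (T.parent v)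
        have hch : cheb (e^2) x (j+2) = x * cheb (e^2) x (j+1) - e^2 * cheb (e^2) x j := rfl
        rw [hch]
        field_simp at heq
        linear_combination -heq + cheb (e^2) x j * f v * hdcast
    have hf00 : f 0 = 0 := by
      have heq := hAf' 0
      rw [if_pos rfl, add_zero] at heq
      rcases Nat.lt_or_ge k 2 with hk2 | hk2
      · -- k = 1
        have hk1 : k = 1 := by omega
        have hemp : T.children 0 = ∅ := Finset.card_eq_zero.mp (hleaf 0 (by rw [hlvl0, hk1]))
        rw [hemp, Finset.sum_empty] at heq
        have hx0 : cheb (e^2) x 1 ≠ 0 := hcon 1 le_rfl (by omega)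
        have : x ≠ 0 := by simpa [cheb] using hx0
        have := mul_eq_zero.mp heq.symm
        tauto
      · obtain ⟨m, hm⟩ : ∃ m, k = m + 2 := ⟨k - 2, by omega⟩
        have hlt0 : lvl 0 < k := by rw [hlvl0]; omega
        have hcard := hbethe 0 hlt0
        have hnem : cheb (e^2) x (m+1) ≠ 0 := hcon (m+1) (by omega) (by omega)
        have hsum : ∑ w ∈ T.children 0, f w
            = ((d-1 : ℕ) : ℝ) * (cheb (e^2) x m * f 0 / cheb (e^2) x (m+1)) := by
          rw [Finset.sum_congr rfl (fun w hw => ?_), Finset.sum_const, hcard, nsmul_eq_mul]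
          have hw0 := child_ne_zero 0 w hw
          have hwl : lvl w + m = k := by have := child_lvl 0 w hw; rw [hlvl0] at this; omega
          have hiw := hC m w hw0 hwl
          rw [(hchild 0 w hw).1] at hiw
          field_simp
          linarith [hiw]
        rw [hsum] at heq
        have hnek : cheb (e^2) x (m+2) ≠ 0 := by
          have := hcon (m+2) (by omega) (by omega)
          exact this
        have hkey : cheb (e^2) x (m+2) * f 0 = 0 := by
          have hch : cheb (e^2) x (m+2) = x * cheb (e^2) x (m+1) - e^2 * cheb (e^2) x m := rfl
          rw [hch]
          field_simp at heq
          linear_combination -heq + cheb (e^2) x m * f 0 * hdcast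
        exact (mul_eq_zero.mp hkey).resolve_left hnek
    have hzero : ∀ m : ℕ, ∀ v : Fin (n+1), v.val < m → f v = 0 := by
      intro m
      induction m with
      | zero => intro v hv; omega
      | succ m ih =>
        intro v hv
        by_cases hv0 : v = 0
        · rw [hv0]; exact hf00
        · have hp : (T.parent v).val < m := by
            have h1 := T.parent_lt v hv0
            have h2 : (T.parent v).val < v.val := h1
            omega
          have hfp : f (T.parent v) = 0 := ih (T.parent v) hp
          have hlv : lvl v + (k - lvl v) = k := by have := hle v; omega
          have := hC (k - lvl v) v hv0 hlv
          rw [hfp, mul_zero] at this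
          have hnej : cheb (e^2) x (k - lvl v + 1) ≠ 0 := by
            apply hcon
            · omega
            · have := lvl_pos v; omega
          exact (mul_eq_zero.mp this).resolve_left hnej
    apply hf0
    funext v
    exact hzero (v.val + 1) v (Nat.lt_succ_self _)
  · -- cheb root implies eigenvector
    rintro ⟨j, hj1, hjk, hroot⟩
    obtain ⟨h, hh1, hh2, hxval⟩ := (cheb_root_iff he j hj1 x).mp hroot
    set θ := (h : ℝ) * Real.pi / ((j : ℝ) + 1) with hθdef
    have hπ : (0:ℝ) < Real.pi := Real.pi_pos
    have hθ1 : 0 < θ := by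
      apply div_pos
      · have : (0:ℝ) < (h:ℝ) := by exact_mod_cast hh1
        positivity
      · positivity
    have hθ2 : θ < Real.pi := by
      rw [hθdef, div_lt_iff₀ (by positivity : (0:ℝ) < (j:ℝ) + 1)]
      have : (h:ℝ) ≤ (j:ℝ) := by exact_mod_cast hh2
      nlinarith
    have hsinθ : Real.sin θ ≠ 0 := ne_of_gt (Real.sin_pos_of_pos_of_lt_pi hθ1 hθ2)
    set a : ℕ → ℝ := fun i => Real.sin ((i : ℝ) * θ) / e ^ i with ha
    have ha0 : a 0 = 0 := by simp [ha]
    have haj : a (j + 1) = 0 := by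
      have hjθ : ((j + 1 : ℕ) : ℝ) * θ = (h:ℝ) * Real.pi := by
        rw [hθdef]; push_cast; field_simp
      simp only [ha]
      rw [hjθ, Real.sin_nat_mul_pi, zero_div]
    have ha1 : a 1 ≠ 0 := by
      simp only [ha]
      rw [Nat.cast_one, one_mul, pow_one]
      exact div_ne_zero hsinθ (ne_of_gt he)
    have key : ∀ i : ℕ, x * a (i + 1) = a i + e ^ 2 * a (i + 2) := by
      intro i
      have := cheb_key e θ (ne_of_gt he) i
      simp only [ha]
      rw [hxval]
      convert this using 3
    by_cases hjk' : j = k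
    · -- top-level eigenvector
      subst hjk'
      refine ⟨fun v => a (lvl v), ?_, ?_⟩
      · intro hcontra
        have h0 := congrFun hcontra 0
        rw [hlvl0] at h0
        exact ha1 h0
      · funext v
        rw [sumAdj]
        simp only [Pi.smul_apply, smul_eq_mul]
        have hsum : ∑ w ∈ T.children v, a (lvl w) = ((T.children v).card : ℝ) * a (lvl v + 1) := by
          rw [Finset.sum_congr rfl (fun w hw => by rw [child_lvl v w hw]), Finset.sum_const,
            nsmul_eq_mul]
        have hcard : ((T.children v).card : ℝ) * a (lvl v + 1) = e ^ 2 * a (lvl v + 1) := by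
          rcases lt_or_eq_of_le (hle v) with hv | hv
          · rw [hbethe v hv, hdcast]
          · rw [hv, haj, mul_zero, mul_zero]
        rw [hsum, hcard]
        by_cases hv0 : v = 0
        · rw [if_pos hv0, add_zero, hv0, hlvl0]
          have := key 0
          rw [ha0] at this
          linarith [this]
        · rw [if_neg hv0]
          have hpl : lvl v = lvl (T.parent v) + 1 := hlvl v hv0
          set p := lvl (T.parent v) with hp
          rw [hpl]
          have := key p
          linarith [this]
    · -- subtree eigenvector
      have hjlt : j < k := lt_of_le_of_ne hjk hjk'
      have hexists : ∀ ℓ : ℕ, 1 ≤ ℓ → ℓ ≤ k → ∃ v, lvl v = ℓ := by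
        intro ℓ
        induction ℓ with
        | zero => omega
        | succ ℓ ih =>
          intro h1 h2
          rcases Nat.eq_zero_or_pos ℓ with hℓ | hℓ
          · exact ⟨0, by rw [hlvl0, hℓ]⟩
          · obtain ⟨v, hv⟩ := ih hℓ (by omega)
            have hvk : lvl v < k := by omega
            have hcard := hbethe v hvk
            have hne : (T.children v).Nonempty := Finset.card_pos.mp (by omega)
            obtain ⟨w, hw⟩ := hne
            exact ⟨w, by rw [child_lvl v w hw, hv]⟩
      obtain ⟨u, hu⟩ := hexists (k - j) (by omega) (by omega)
      have hulk : lvl u < k := by omega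
      have hucard := hbethe u hulk
      have h2card : 1 < (T.children u).card := by omega
      obtain ⟨c1, hc1, c2, hc2, hc12⟩ := Finset.one_lt_card.mp h2card
      set L := lvl u + 1 with hL
      set Sub : Fin (n+1) → Fin (n+1) → Prop :=
        fun c v => L ≤ lvl v ∧ T.parent^[lvl v - L] v = c with hSub
      set g : Fin (n+1) → Fin (n+1) → ℝ :=
        fun c v => if Sub c v then a (lvl v - lvl u) else 0 with hg
      have hsubc : ∀ c, c ∈ T.children u → Sub c c := by
        intro c hc
        have hcl : lvl c = L := by rw [child_lvl u c hc]
        exact ⟨le_of_eq hcl.symm, by rw [show lvl c - L = 0 from by omega]; simp⟩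
      have hsub_parent : ∀ c, c ∈ T.children u → ∀ v, Sub c v → v ≠ c →
          v ≠ 0 ∧ Sub c (T.parent v) := by
        intro c hc v hsv hvc
        obtain ⟨hv1, hv2⟩ := hsv
        have hcl : lvl c = L := by rw [child_lvl u c hc]
        have hLlt : L < lvl v := by
          rcases lt_or_eq_of_le hv1 with h' | h'
          · exact h'
          · exfalso
            rw [show lvl v - L = 0 from by omega] at hv2
            simp at hv2
            exact hvc hv2
        have hv0 : v ≠ 0 := by
          intro h0
          rw [h0, hlvl0] at hLlt
          have := lvl_pos u
          omega
        have hpl : lvl v = lvl (T.parent v) + 1 := hlvl v hv0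
        refine ⟨hv0, ⟨by omega, ?_⟩⟩
        have hit : T.parent^[lvl v - L] v
            = T.parent^[lvl (T.parent v) - L] (T.parent v) := by
          rw [show lvl v - L = (lvl (T.parent v) - L) + 1 from by omega,
            Function.iterate_succ_apply]
        rw [← hit]
        exact hv2
      have hsub_child : ∀ c, ∀ v w, Sub c v → w ∈ T.children v → Sub c w := by
        intro c v w hsv hw
        obtain ⟨hv1, hv2⟩ := hsv
        have hwl : lvl w = lvl v + 1 := child_lvl v w hw
        refine ⟨by omega, ?_⟩
        rw [show lvl w - L = (lvl v - L) + 1 from by omega, Function.iterate_succ_apply,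
          (hchild v w hw).1]
        exact hv2
      have hsub_notu : ∀ c, ¬ Sub c u := by
        intro c hs
        have := hs.1
        omega
      have hsub_unique : ∀ v, Sub c1 v → Sub c2 v → False := by
        intro v h1 h2
        exact hc12 (h1.2.symm.trans h2.2)
      have hchildu : ∀ c, c ∈ T.children u → ∀ w, w ∈ T.children u → Sub c w → w = c := by
        intro c hc w hw hs
        have hwl : lvl w = L := by rw [child_lvl u w hw]
        have := hs.2
        rw [show lvl w - L = 0 from by omega] at this
        simpa using this
      have hgval : ∀ c, c ∈ T.children u → g c c = a 1 := by
        intro c hc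
        rw [hg]
        simp only
        rw [if_pos (hsubc c hc), child_lvl u c hc]
        congr 1
        omega
      have hclaim : ∀ c, c ∈ T.children u → ∀ v,
          (∑ w ∈ T.children v, g c w) + (if v = 0 then 0 else g c (T.parent v))
            = x * g c v + (if v = u then a 1 else 0) := by
        intro c hc v
        by_cases hvu : v = u
        · subst hvu
          have hgu : g c v = 0 := if_neg (hsub_notu c)
          rw [hgu, mul_zero, if_pos rfl, zero_add]
          have hpar : (if v = 0 then (0:ℝ) else g c (T.parent v)) = 0 := by
            by_cases hv0 : v = 0
            · rw [if_pos hv0]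
            · rw [if_neg hv0]
              apply if_neg
              rintro ⟨h1, -⟩
              have := hlvl v hv0
              omega
          rw [hpar, add_zero]
          rw [Finset.sum_eq_single_of_mem c hc ?_]
          · exact hgval c hc
          · intro w hw hwc
            apply if_neg
            intro hs
            exact hwc (hchildu c hc w hw hs)
        · by_cases hsv : Sub c v
          · have hvL : L ≤ lvl v := hsv.1
            set m := lvl v - lvl u with hm
            have hm1 : 1 ≤ m := by omega
            have hgv : g c v = a m := if_pos hsv
            have hsum : ∑ w ∈ T.children v, g c w = ((T.children v).card : ℝ) * a (m + 1) := by
              rw [Finset.sum_congr rfl (fun w hw => ?_), Finset.sum_const, nsmul_eq_mul]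
              have hsw := hsub_child c v w hsv hw
              have hwl : lvl w = lvl v + 1 := child_lvl v w hw
              show (if Sub c w then a (lvl w - lvl u) else 0) = a (m + 1)
              rw [if_pos hsw]
              congr 1
              omega
            have hcard : ((T.children v).card : ℝ) * a (m + 1) = e ^ 2 * a (m + 1) := by
              rcases lt_or_eq_of_le (hle v) with hv' | hv'
              · rw [hbethe v hv', hdcast]
              · have hmj : m = j := by omega
                rw [hmj, haj, mul_zero, mul_zero]
            have hpar : (if v = 0 then (0:ℝ) else g c (T.parent v)) = a (m - 1) := by
              by_cases hvc : v = c
              · have hv0 : v ≠ 0 := by rw [hvc]; exact child_ne_zero u c hc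
                have hpu : T.parent v = u := by rw [hvc]; exact (hchild u c hc).1
                rw [if_neg hv0, hpu]
                have hgu : g c u = 0 := if_neg (hsub_notu c)
                rw [hgu]
                have hlc : lvl v = lvl u + 1 := by rw [hvc]; exact child_lvl u c hc
                have hm1' : m = 1 := by omega
                rw [hm1', ha0]
              · obtain ⟨hv0, hsp⟩ := hsub_parent c hc v hsv hvc
                rw [if_neg hv0]
                show (if Sub c (T.parent v) then a (lvl (T.parent v) - lvl u) else 0) = a (m - 1)
                rw [if_pos hsp]
                congr 1
                have := hlvl v hv0
                omega
            rw [hsum, hcard, hpar, hgv, if_neg hvu, add_zero]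
            obtain ⟨t, ht⟩ : ∃ t, m = t + 1 := ⟨m - 1, by omega⟩
            rw [ht, show t + 1 - 1 = t from by omega]
            have hkey := key t
            linarith [hkey]
          · have hgv : g c v = 0 := if_neg hsv
            rw [hgv, mul_zero, if_neg hvu, add_zero]
            have hsum : ∑ w ∈ T.children v, g c w = 0 := by
              apply Finset.sum_eq_zero
              intro w hw
              apply if_neg
              intro hsw
              by_cases hwc : w = c
              · apply hvu
                have h1 : T.parent w = v := (hchild v w hw).1
                have h2 : T.parent w = u := by rw [hwc]; exact (hchild u c hc).1
                rw [← h1, h2]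
              · obtain ⟨hw0, hsp⟩ := hsub_parent c hc w hsw hwc
                rw [(hchild v w hw).1] at hsp
                exact hsv hsp
            have hpar : (if v = 0 then (0:ℝ) else g c (T.parent v)) = 0 := by
              by_cases hv0 : v = 0
              · rw [if_pos hv0]
              · rw [if_neg hv0]
                apply if_neg
                intro hsp
                have hvmem : v ∈ T.children (T.parent v) :=
                  Finset.mem_filter.mpr ⟨Finset.mem_univ v, rfl,
                    ne_of_gt (T.parent_lt v hv0)⟩
                exact hsv (hsub_child c (T.parent v) v hsp hvmem)
            rw [hsum, hpar, add_zero]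
      refine ⟨fun v => g c1 v - g c2 v, ?_, ?_⟩
      · intro hcontra
        have hfc1 := congrFun hcontra c1
        have h1 : g c1 c1 = a 1 := hgval c1 hc1
        have h2 : g c2 c1 = 0 := by
          apply if_neg
          intro hs
          exact hsub_unique c1 (hsubc c1 hc1) hs
        simp only [h1, h2, sub_zero, Pi.zero_apply] at hfc1
        exact ha1 hfc1
      · funext v
        rw [sumAdj]
        simp only [Pi.smul_apply, smul_eq_mul]
        have e1 := hclaim c1 hc1 v
        have e2 := hclaim c2 hc2 v
        rw [Finset.sum_sub_distrib]
        by_cases hv0 : v = 0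
        · rw [if_pos hv0]
          rw [if_pos hv0] at e1 e2
          linarith [e1, e2]
        · rw [if_neg hv0]
          rw [if_neg hv0] at e1 e2
          linarith [e1, e2]
end
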